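/- Frieze–Kannan weak regularity lemma: Let ε > 0. Every finite graph G on vertex set V has a vertex partition 𝒫 into at most 2^{2/ε²} parts that is ε-FK-regular, i.e., such that for all S, T ⊆ V, |e(S,T) − Σ_{i,j} d(V_i,V_j)·|S ∩ V_i|·|T ∩ V_j|| ≤ ε·|V|², where V₁,…,V_t are the parts of 𝒫. -/

import Mathlib

open Finset

set_option linter.unusedSectionVars false

variable {V : Type*} [Fintype V] [DecidableEq V]

/-- Number of ordered pairs `(x,y) ∈ X × Y` that are edges of `G`. -/
def epairs (G : SimpleGraph V) [DecidableRel G.Adj] (X Y : Finset V) : ℕ :=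
  ((X ×ˢ Y).filter fun p => G.Adj p.1 p.2).card

/-- Edge density between `X` and `Y`. -/
noncomputable def dens (G : SimpleGraph V) [DecidableRel G.Adj] (X Y : Finset V) : ℝ :=
  (epairs G X Y : ℝ) / ((X.card : ℝ) * (Y.card : ℝ))

namespace FK

variable (G : SimpleGraph V) [DecidableRel G.Adj]

/-- Real-valued indicator of adjacency. -/
def adj01 (u v : V) : ℝ := if G.Adj u v then 1 else 0

/-- The "conditional density" function of a partition. -/
noncomputable def f (P : Finpartition (univ : Finset V)) (u v : V) : ℝ :=
  dens G (P.part u) (P.part v)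

/-- The (unnormalised) energy of a partition. -/
noncomputable def q (P : Finpartition (univ : Finset V)) : ℝ :=
  ∑ u, ∑ v, (f G P u v) ^ 2

lemma epairs_cast (S T : Finset V) :
    (epairs G S T : ℝ) = ∑ u ∈ S, ∑ v ∈ T, adj01 G u v := by
  unfold epairs adj01
  rw [card_filter]
  push_cast
  rw [Finset.sum_product]

lemma epairs_le (X Y : Finset V) : epairs G X Y ≤ X.card * Y.card := by
  calc epairs G X Y ≤ (X ×ˢ Y).card := card_filter_le _ _
    _ = X.card * Y.card := card_product _ _

lemma dens_nonneg (X Y : Finset V) : 0 ≤ _root_.dens G X Y := by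
  unfold _root_.dens; positivity

lemma dens_le_one (X Y : Finset V) : _root_.dens G X Y ≤ 1 := by
  unfold _root_.dens
  apply div_le_one_of_le₀
  · exact_mod_cast epairs_le G X Y
  · positivity

lemma dens_mul_card {X Y : Finset V} (hX : X.Nonempty) (hY : Y.Nonempty) :
    _root_.dens G X Y * ((X.card : ℝ) * (Y.card : ℝ)) = (epairs G X Y : ℝ) := by
  unfold _root_.dens
  rw [div_mul_cancel₀]
  have h1 : 0 < X.card := hX.card_pos
  have h2 : 0 < Y.card := hY.card_pos
  positivity

lemma f_nonneg (P : Finpartition (univ : Finset V)) (u v : V) : 0 ≤ f G P u v :=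
  dens_nonneg G _ _

lemma f_le_one (P : Finpartition (univ : Finset V)) (u v : V) : f G P u v ≤ 1 :=
  dens_le_one G _ _

end FK

/-- Splitting a sum over `S` along a partition of `univ`. -/
lemma FK.sum_parts_inter (R : Finpartition (univ : Finset V)) (S : Finset V) (g : V → ℝ) :
    ∑ x ∈ R.parts, ∑ u ∈ x ∩ S, g u = ∑ u ∈ S, g u := by
  have hdisj : (↑R.parts : Set (Finset V)).PairwiseDisjoint (fun x => x ∩ S) :=
    fun x hx y hy hxy =>
      (R.disjoint hx hy hxy).mono inter_subset_left inter_subset_left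
  rw [← Finset.sum_biUnion hdisj]
  congr 1
  ext u
  simp only [mem_biUnion, mem_inter]
  constructor
  · rintro ⟨x, hx, _, huS⟩; exact huS
  · intro huS
    exact ⟨R.part u, R.part_mem.2 (mem_univ u), R.mem_part (mem_univ u), huS⟩

/-- Splitting a double sum along a partition of `univ` in both coordinates. -/
lemma FK.quad (R : Finpartition (univ : Finset V)) (S T : Finset V) (g : V → V → ℝ) :
    ∑ u ∈ S, ∑ v ∈ T, g u v =
      ∑ x ∈ R.parts, ∑ y ∈ R.parts, ∑ u ∈ x ∩ S, ∑ v ∈ y ∩ T, g u v := by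
  rw [← FK.sum_parts_inter R S (fun u => ∑ v ∈ T, g u v)]
  refine Finset.sum_congr rfl fun x _ => ?_
  calc ∑ u ∈ x ∩ S, ∑ v ∈ T, g u v
      = ∑ u ∈ x ∩ S, ∑ y ∈ R.parts, ∑ v ∈ y ∩ T, g u v :=
        Finset.sum_congr rfl fun u _ => (FK.sum_parts_inter R T (g u)).symm
    _ = ∑ y ∈ R.parts, ∑ u ∈ x ∩ S, ∑ v ∈ y ∩ T, g u v := Finset.sum_comm

namespace FK

variable (G : SimpleGraph V) [DecidableRel G.Adj]

lemma sum_rect (Q : Finpartition (univ : Finset V)) {x y : Finset V}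
    (hx : x ∈ Q.parts) (hy : y ∈ Q.parts) :
    ∑ u ∈ x, ∑ v ∈ y, f G Q u v = ∑ u ∈ x, ∑ v ∈ y, adj01 G u v := by
  have hconst : ∀ u ∈ x, ∀ v ∈ y, f G Q u v = dens G x y := by
    intro u hu v hv
    unfold f
    rw [Q.part_eq_of_mem hx hu, Q.part_eq_of_mem hy hv]
  calc ∑ u ∈ x, ∑ v ∈ y, f G Q u v
      = ∑ _u ∈ x, ∑ _v ∈ y, dens G x y :=
        Finset.sum_congr rfl fun u hu => Finset.sum_congr rfl fun v hv => hconst u hu v hv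
    _ = dens G x y * ((x.card : ℝ) * (y.card : ℝ)) := by
        simp [Finset.sum_const, nsmul_eq_mul]; ring
    _ = (epairs G x y : ℝ) :=
        dens_mul_card G (Q.nonempty_of_mem_parts hx) (Q.nonempty_of_mem_parts hy)
    _ = ∑ u ∈ x, ∑ v ∈ y, adj01 G u v := epairs_cast G x y

/-- `Q` splits `S` if every part is inside or disjoint from `S`. -/
def Splits (Q : Finpartition (univ : Finset V)) (S : Finset V) : Prop :=
  ∀ x ∈ Q.parts, x ⊆ S ∨ Disjoint x S

lemma splits_of_le {Q P : Finpartition (univ : Finset V)} (h : Q ≤ P) {X : Finset V}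
    (hX : X ∈ P.parts) : Splits Q X := by
  intro x hx
  obtain ⟨Y, hY, hxY⟩ := h hx
  by_cases hXY : Y = X
  · exact Or.inl (hxY.trans hXY.le)
  · exact Or.inr (disjoint_of_subset_left hxY (P.disjoint hY hX hXY))

lemma sum_split (Q : Finpartition (univ : Finset V)) {S T : Finset V}
    (hS : Splits Q S) (hT : Splits Q T) :
    ∑ u ∈ S, ∑ v ∈ T, f G Q u v = ∑ u ∈ S, ∑ v ∈ T, adj01 G u v := by
  rw [FK.quad Q S T, FK.quad Q S T]
  refine Finset.sum_congr rfl fun x hx => Finset.sum_congr rfl fun y hy => ?_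
  rcases hS x hx with hxS | hxS
  · rcases hT y hy with hyT | hyT
    · rw [inter_eq_left.2 hxS, inter_eq_left.2 hyT]
      exact sum_rect G Q hx hy
    · rw [(Finset.disjoint_iff_inter_eq_empty).1 hyT]
      simp
  · rw [(Finset.disjoint_iff_inter_eq_empty).1 hxS]
    simp

lemma sum_mul_f {Q P : Finpartition (univ : Finset V)} (hQP : Q ≤ P) :
    ∑ u, ∑ v, f G Q u v * f G P u v = q G P := by
  unfold q
  rw [FK.quad P univ univ (fun u v => f G Q u v * f G P u v),
    FK.quad P univ univ (fun u v => f G P u v ^ 2)]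
  refine Finset.sum_congr rfl fun x hx => Finset.sum_congr rfl fun y hy => ?_
  rw [inter_univ, inter_univ]
  have hconst : ∀ u ∈ x, ∀ v ∈ y, f G P u v = dens G x y := by
    intro u hu v hv
    unfold f
    rw [P.part_eq_of_mem hx hu, P.part_eq_of_mem hy hv]
  have key : ∑ u ∈ x, ∑ v ∈ y, f G Q u v = ∑ u ∈ x, ∑ v ∈ y, f G P u v := by
    rw [sum_split G Q (splits_of_le hQP hx) (splits_of_le hQP hy),
      sum_split G P (splits_of_le (le_refl P) hx) (splits_of_le (le_refl P) hy)]
  calc ∑ u ∈ x, ∑ v ∈ y, f G Q u v * f G P u v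
      = ∑ u ∈ x, ∑ v ∈ y, f G Q u v * dens G x y :=
        Finset.sum_congr rfl fun u hu => Finset.sum_congr rfl fun v hv => by
          rw [hconst u hu v hv]
    _ = (∑ u ∈ x, ∑ v ∈ y, f G Q u v) * dens G x y := by
        simp [Finset.sum_mul]
    _ = (∑ u ∈ x, ∑ v ∈ y, f G P u v) * dens G x y := by rw [key]
    _ = ∑ u ∈ x, ∑ v ∈ y, f G P u v * dens G x y := by
        simp [Finset.sum_mul]
    _ = ∑ u ∈ x, ∑ v ∈ y, f G P u v ^ 2 :=
        Finset.sum_congr rfl fun u hu => Finset.sum_congr rfl fun v hv => by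
          rw [sq, hconst u hu v hv]

lemma q_diff {Q P : Finpartition (univ : Finset V)} (hQP : Q ≤ P) :
    ∑ u, ∑ v, (f G Q u v - f G P u v) ^ 2 = q G Q - q G P := by
  have h := sum_mul_f G hQP
  have expand : ∑ u, ∑ v, (f G Q u v - f G P u v) ^ 2 =
      q G Q - 2 * (∑ u, ∑ v, f G Q u v * f G P u v) + q G P := by
    unfold q
    simp only [sub_sq, Finset.sum_add_distrib, Finset.sum_sub_distrib, Finset.mul_sum, mul_assoc]
  rw [expand, h]
  ring

lemma q_nonneg (P : Finpartition (univ : Finset V)) : 0 ≤ q G P := by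
  unfold q
  positivity

lemma q_le (P : Finpartition (univ : Finset V)) : q G P ≤ (Fintype.card V : ℝ) ^ 2 := by
  unfold q
  calc ∑ u, ∑ v, (f G P u v) ^ 2 ≤ ∑ (_u : V), ∑ (_v : V), (1 : ℝ) :=
      Finset.sum_le_sum fun u _ => Finset.sum_le_sum fun v _ =>
        pow_le_one₀ (f_nonneg G P u v) (f_le_one G P u v)
    _ = (Fintype.card V : ℝ) ^ 2 := by simp [sq, Finset.card_univ]

lemma defect_sq_le {Q P : Finpartition (univ : Finset V)} (hQP : Q ≤ P) {S T : Finset V}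
    (hS : Splits Q S) (hT : Splits Q T) :
    (∑ u ∈ S, ∑ v ∈ T, (adj01 G u v - f G P u v)) ^ 2 ≤
      (Fintype.card V : ℝ) ^ 2 * (q G Q - q G P) := by
  have h1 : ∑ u ∈ S, ∑ v ∈ T, (adj01 G u v - f G P u v) =
      ∑ u ∈ S, ∑ v ∈ T, (f G Q u v - f G P u v) := by
    simp only [Finset.sum_sub_distrib]
    rw [sum_split G Q hS hT]
  rw [h1]
  have h2 : ∑ u ∈ S, ∑ v ∈ T, (f G Q u v - f G P u v) =
      ∑ p ∈ S ×ˢ T, (f G Q p.1 p.2 - f G P p.1 p.2) := (Finset.sum_product' _ _ _).symm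
  rw [h2]
  calc (∑ p ∈ S ×ˢ T, (f G Q p.1 p.2 - f G P p.1 p.2)) ^ 2
      ≤ ((S ×ˢ T).card : ℝ) * ∑ p ∈ S ×ˢ T, (f G Q p.1 p.2 - f G P p.1 p.2) ^ 2 :=
        sq_sum_le_card_mul_sum_sq
    _ ≤ (Fintype.card V : ℝ) ^ 2 *
          ∑ p ∈ (univ ×ˢ univ : Finset (V × V)), (f G Q p.1 p.2 - f G P p.1 p.2) ^ 2 := by
        apply mul_le_mul
        · have : (S ×ˢ T).card ≤ Fintype.card V * Fintype.card V := by
            rw [card_product]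
            exact Nat.mul_le_mul (card_le_card (subset_univ S)) (card_le_card (subset_univ T))
          calc ((S ×ˢ T).card : ℝ) ≤ (Fintype.card V * Fintype.card V : ℕ) := by exact_mod_cast this
            _ = (Fintype.card V : ℝ) ^ 2 := by push_cast; ring
        · exact Finset.sum_le_sum_of_subset_of_nonneg
            (by exact Finset.product_subset_product (subset_univ S) (subset_univ T))
            (fun p _ _ => sq_nonneg _)
        · exact Finset.sum_nonneg fun p _ => sq_nonneg _
        · positivity
    _ = (Fintype.card V : ℝ) ^ 2 * (q G Q - q G P) := by
        rw [Finset.sum_product' univ univ (fun u v => (f G Q u v - f G P u v) ^ 2),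
          q_diff G hQP]

lemma exists_refinement (P : Finpartition (univ : Finset V)) (S T : Finset V) :
    ∃ Q : Finpartition (univ : Finset V),
      Q ≤ P ∧ Q.parts.card ≤ 4 * P.parts.card ∧ Splits Q S ∧ Splits Q T := by
  classical
  refine ⟨P.bind fun X _ => Finpartition.atomise X {S, T}, ?_, ?_, ?_, ?_⟩
  · intro b hb
    rw [Finpartition.mem_bind] at hb
    obtain ⟨A, hA, hbA⟩ := hb
    exact ⟨A, hA, Finpartition.le _ hbA⟩
  · rw [Finpartition.card_bind]
    calc ∑ A ∈ P.parts.attach, (Finpartition.atomise A.1 {S, T}).parts.card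
        ≤ ∑ _A ∈ P.parts.attach, 4 := by
          refine Finset.sum_le_sum fun A _ => ?_
          refine Finpartition.card_atomise_le.trans ?_
          calc 2 ^ ({S, T} : Finset (Finset V)).card ≤ 2 ^ 2 :=
              Nat.pow_le_pow_right (by norm_num)
                ((card_insert_le _ _).trans (by simp))
            _ = 4 := by norm_num
      _ = 4 * P.parts.card := by
          rw [Finset.sum_const, Finset.card_attach, smul_eq_mul, mul_comm]
  all_goals {
    intro x hx
    rw [Finpartition.mem_bind] at hx
    obtain ⟨A, hA, hx⟩ := hx
    rw [Finpartition.mem_atomise] at hx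
    obtain ⟨hne, Q', hQ'F, rfl⟩ := hx
    first
    | (by_cases hSQ : S ∈ Q'
       · left
         intro i hi
         simp only [Finset.mem_filter] at hi
         exact (hi.2 S (by simp)).1 hSQ
       · right
         rw [Finset.disjoint_left]
         intro i hi hiS
         simp only [Finset.mem_filter] at hi
         exact hSQ ((hi.2 S (by simp)).2 hiS))
    | (by_cases hSQ : T ∈ Q'
       · left
         intro i hi
         simp only [Finset.mem_filter] at hi
         exact (hi.2 T (by simp)).1 hSQ
       · right
         rw [Finset.disjoint_left]
         intro i hi hiS
         simp only [Finset.mem_filter] at hi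
         exact hSQ ((hi.2 T (by simp)).2 hiS))
  }

variable (ε : ℝ)

/-- FK-regularity of a partition, in pointwise form. -/
def Regular (P : Finpartition (univ : Finset V)) : Prop :=
  ∀ S T : Finset V,
    |∑ u ∈ S, ∑ v ∈ T, (adj01 G u v - f G P u v)| ≤ ε * (Fintype.card V : ℝ) ^ 2

lemma increment (hε : 0 < ε) (hn : 0 < (Fintype.card V : ℝ))
    (P : Finpartition (univ : Finset V)) {S T : Finset V}
    (hd : ε * (Fintype.card V : ℝ) ^ 2 <
      |∑ u ∈ S, ∑ v ∈ T, (adj01 G u v - f G P u v)|) :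
    ∃ Q : Finpartition (univ : Finset V),
      Q.parts.card ≤ 4 * P.parts.card ∧
      q G P + ε ^ 2 * (Fintype.card V : ℝ) ^ 2 ≤ q G Q := by
  obtain ⟨Q, hQP, hcard, hS, hT⟩ := exists_refinement P S T
  refine ⟨Q, hcard, ?_⟩
  have h := defect_sq_le G hQP hS hT
  set n : ℝ := (Fintype.card V : ℝ) with hndef
  have h2 : (ε * n ^ 2) ^ 2 < (∑ u ∈ S, ∑ v ∈ T, (adj01 G u v - f G P u v)) ^ 2 := by
    have h0 : 0 ≤ ε * n ^ 2 := by positivity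
    calc (ε * n ^ 2) ^ 2 < |∑ u ∈ S, ∑ v ∈ T, (adj01 G u v - f G P u v)| ^ 2 := by
          apply pow_lt_pow_left₀ hd h0
          norm_num
      _ = (∑ u ∈ S, ∑ v ∈ T, (adj01 G u v - f G P u v)) ^ 2 := sq_abs _
  have h3 : n ^ 2 * (ε ^ 2 * n ^ 2) < n ^ 2 * (q G Q - q G P) := by
    calc n ^ 2 * (ε ^ 2 * n ^ 2) = (ε * n ^ 2) ^ 2 := by ring
      _ < (∑ u ∈ S, ∑ v ∈ T, (adj01 G u v - f G P u v)) ^ 2 := h2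
      _ ≤ n ^ 2 * (q G Q - q G P) := h
  have h4 : ε ^ 2 * n ^ 2 < q G Q - q G P :=
    lt_of_mul_lt_mul_left h3 (by positivity)
  linarith

lemma induction_step (hε : 0 < ε) (hn : 0 < (Fintype.card V : ℝ)) :
    ∀ k : ℕ, ∃ P : Finpartition (univ : Finset V),
      P.parts.card ≤ 4 ^ k ∧
      (Regular G ε P ∨ (k : ℝ) * (ε ^ 2 * (Fintype.card V : ℝ) ^ 2) ≤ q G P) := by
  intro k
  induction k with
  | zero =>
    have huniv : (univ : Finset V).Nonempty := by
      rw [← Finset.card_pos]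
      exact_mod_cast hn
    refine ⟨Finpartition.indiscrete ?_, ?_, Or.inr ?_⟩
    · exact huniv.ne_empty
    · simp [Finpartition.indiscrete]
    · simpa using q_nonneg G _
  | succ k ih =>
    obtain ⟨P, hcard, hP⟩ := ih
    have hcard' : P.parts.card ≤ 4 ^ (k + 1) :=
      hcard.trans (Nat.pow_le_pow_right (by norm_num) (Nat.le_succ k))
    rcases hP with hreg | hq
    · exact ⟨P, hcard', Or.inl hreg⟩
    · by_cases hreg : Regular G ε P
      · exact ⟨P, hcard', Or.inl hreg⟩
      · rw [Regular] at hreg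
        push_neg at hreg
        obtain ⟨S, T, hd⟩ := hreg
        obtain ⟨Q, hQcard, hQq⟩ := increment G ε hε hn P hd
        refine ⟨Q, ?_, Or.inr ?_⟩
        · calc Q.parts.card ≤ 4 * P.parts.card := hQcard
            _ ≤ 4 * 4 ^ k := by omega
            _ = 4 ^ (k + 1) := by ring
        · push_cast
          have : (k : ℝ) * (ε ^ 2 * (Fintype.card V : ℝ) ^ 2) ≤ q G P := hq
          nlinarith [q_nonneg G P]

lemma sum_dens_eq (P : Finpartition (univ : Finset V)) (S T : Finset V) :
    ∑ X ∈ P.parts, ∑ Y ∈ P.parts,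
        _root_.dens G X Y * ((S ∩ X).card : ℝ) * ((T ∩ Y).card : ℝ) =
      ∑ u ∈ S, ∑ v ∈ T, f G P u v := by
  rw [FK.quad P S T (f G P)]
  refine Finset.sum_congr rfl fun X hX => Finset.sum_congr rfl fun Y hY => ?_
  have hconst : ∀ u ∈ X ∩ S, ∀ v ∈ Y ∩ T, f G P u v = _root_.dens G X Y := by
    intro u hu v hv
    unfold f
    rw [P.part_eq_of_mem hX (Finset.mem_of_mem_inter_left hu),
      P.part_eq_of_mem hY (Finset.mem_of_mem_inter_left hv)]
  calc _root_.dens G X Y * ((S ∩ X).card : ℝ) * ((T ∩ Y).card : ℝ)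
      = ((X ∩ S).card : ℝ) * (((Y ∩ T).card : ℝ) * _root_.dens G X Y) := by
        rw [inter_comm S X, inter_comm T Y]; ring
    _ = ∑ _u ∈ X ∩ S, ∑ _v ∈ Y ∩ T, _root_.dens G X Y := by
        simp [Finset.sum_const, nsmul_eq_mul, mul_assoc]
    _ = ∑ u ∈ X ∩ S, ∑ v ∈ Y ∩ T, f G P u v :=
        Finset.sum_congr rfl fun u hu => Finset.sum_congr rfl fun v hv =>
          (hconst u hu v hv).symm

end FK

theorem frieze_kannan_weak_regularity (G : SimpleGraph V) [DecidableRel G.Adj]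
    (ε : ℝ) (hε : 0 < ε) :
    ∃ P : Finpartition (univ : Finset V),
      (P.parts.card : ℝ) ≤ 2 ^ ((2 : ℝ) / ε ^ 2) ∧
      ∀ S T : Finset V,
        |(epairs G S T : ℝ) -
            ∑ X ∈ P.parts, ∑ Y ∈ P.parts, dens G X Y * ((S ∩ X).card : ℝ) * ((T ∩ Y).card : ℝ)| ≤
          ε * (Fintype.card V : ℝ) ^ 2 := by
  classical
  by_cases hV : Fintype.card V = 0
  · haveI : IsEmpty V := Fintype.card_eq_zero_iff.mp hV
    refine ⟨⊥, ?_, ?_⟩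
    · have : ((⊥ : Finpartition (univ : Finset V)).parts.card : ℝ) = 0 := by
        have huniv : (univ : Finset V) = ⊥ := by simp [Finset.eq_empty_of_isEmpty]
        rw [Finset.card_eq_zero.2 (Finpartition.parts_eq_empty_iff.2 huniv)]
        norm_num
      rw [this]
      positivity
    · intro S T
      have hS : S = ∅ := Finset.eq_empty_of_isEmpty S
      have hT : T = ∅ := Finset.eq_empty_of_isEmpty T
      subst hS; subst hT
      simp [epairs, hV]
  · have hn : 0 < (Fintype.card V : ℝ) := by positivity
    set K : ℕ := Nat.floor (1 / ε ^ 2) with hK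
    obtain ⟨P, hcard, hP⟩ := FK.induction_step G ε hε hn K
    have hreg : FK.Regular G ε P := by
      by_cases hreg : FK.Regular G ε P
      · exact hreg
      · exfalso
        rw [FK.Regular] at hreg
        push_neg at hreg
        obtain ⟨S, T, hd⟩ := hreg
        obtain ⟨Q, _, hQq⟩ := FK.increment G ε hε hn P hd
        have hqP : (K : ℝ) * (ε ^ 2 * (Fintype.card V : ℝ) ^ 2) ≤ FK.q G P := by
          rcases hP with h | h
          · exact absurd (h S T) (not_le.2 hd)
          · exact h
        have hfloor : (1 : ℝ) / ε ^ 2 < (K : ℝ) + 1 := Nat.lt_floor_add_one _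
        have hone : 1 < ((K : ℝ) + 1) * ε ^ 2 := by
          rw [div_lt_iff₀ (by positivity)] at hfloor
          linarith
        have hQle := FK.q_le G Q
        have hn2 : (0 : ℝ) < (Fintype.card V : ℝ) ^ 2 := by positivity
        have key := mul_lt_mul_of_pos_right hone hn2
        nlinarith [key]
    refine ⟨P, ?_, ?_⟩
    · have hKle : (K : ℝ) ≤ 1 / ε ^ 2 := Nat.floor_le (by positivity)
      calc (P.parts.card : ℝ) ≤ ((4 ^ K : ℕ) : ℝ) := by exact_mod_cast hcard
        _ = (2 : ℝ) ^ ((2 * K : ℕ) : ℝ) := by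
            rw [Real.rpow_natCast]
            push_cast
            rw [pow_mul]
            norm_num
        _ ≤ (2 : ℝ) ^ ((2 : ℝ) / ε ^ 2) := by
            rw [Real.rpow_le_rpow_left_iff (by norm_num : (1 : ℝ) < 2)]
            push_cast
            rw [div_eq_mul_one_div]
            linarith
    · intro S T
      have h := hreg S T
      rw [FK.sum_dens_eq G P S T, FK.epairs_cast G S T, ← Finset.sum_sub_distrib]
      simpa [Finset.sum_sub_distrib] using h
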